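/- Let $(p_j)$ be positive, non-increasing, summable frequencies with $\limsup_{j\to\infty} p_{j+1}/p_j \le 1/2$. Then the poissonized variance $V(t) = \sum_j (e^{-tp_j} - e^{-2tp_j})$ satisfies $\limsup_{t\to\infty} V(t) \le 1$. -/

import Mathlib

open Real Filter

/-- Per-term telescoping inequality. -/
lemma perterm (x y ε : ℝ) (hx : 0 ≤ x) (hε : 0 < ε) (hε4 : ε ≤ 1/4)
    (hxy : y ≤ (1/2 + ε) * x) :
    Real.exp (-x) - Real.exp (-(2*x)) ≤
      (Real.exp (-(2*y)) - Real.exp (-(2*x))) + 8*ε*(Real.exp (-y) - Real.exp (-x)) := by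
  have h1 : Real.exp (-x) - Real.exp (-(2*y)) ≤ 2*ε*x*Real.exp (-x) := by
    have h2y : Real.exp (-((1+2*ε)*x)) ≤ Real.exp (-(2*y)) :=
      Real.exp_le_exp.mpr (by nlinarith)
    have e1 : Real.exp (-x) - Real.exp (-((1+2*ε)*x)) ≤ 2*ε*x*Real.exp (-x) := by
      rw [show -((1+2*ε)*x) = (-x) + (-(2*ε*x)) by ring, Real.exp_add]
      have hb := Real.add_one_le_exp (-(2*ε*x))
      nlinarith [Real.exp_pos (-x)]
    linarith
  have h2 : 2*ε*x*Real.exp (-x) ≤ 8*ε*(Real.exp (-y) - Real.exp (-x)) := by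
    have hyy : Real.exp (-((3/4)*x)) ≤ Real.exp (-y) :=
      Real.exp_le_exp.mpr (by nlinarith)
    have e2 : (x/4) * Real.exp (-x) ≤ Real.exp (-((3/4)*x)) - Real.exp (-x) := by
      rw [show -((3/4)*x) = (-x) + (x/4) by ring, Real.exp_add]
      have hb := Real.add_one_le_exp (x/4)
      nlinarith [Real.exp_pos (-x)]
    nlinarith
  linarith

lemma term_nonneg (x : ℝ) (hx : 0 ≤ x) : 0 ≤ Real.exp (-x) - Real.exp (-(2*x)) := by
  have : Real.exp (-(2*x)) ≤ Real.exp (-x) := Real.exp_le_exp.mpr (by linarith)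
  linarith

lemma term_le (x : ℝ) (hx : 0 ≤ x) : Real.exp (-x) - Real.exp (-(2*x)) ≤ x := by
  rw [show -(2*x) = (-x) + (-x) by ring, Real.exp_add]
  have h1 : Real.exp (-x) ≤ 1 := Real.exp_le_one_iff.mpr (by linarith)
  have h2 := Real.add_one_le_exp (-x)
  nlinarith [Real.exp_pos (-x)]

theorem stmt12 (p : ℕ → ℝ) (hpos : ∀ j, 0 < p j) (hmono : ∀ j, p (j + 1) ≤ p j)
    (hsum : Summable p)
    (hratio : Filter.limsup (fun j : ℕ => p (j + 1) / p j) atTop ≤ 1 / 2)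
    (V : ℝ → ℝ)
    (hV : ∀ t : ℝ, V t = ∑' j : ℕ, (Real.exp (-(t * p j)) - Real.exp (-(2 * t * p j)))) :
    Filter.limsup (fun t : ℝ => ((V t : ℝ) : EReal)) atTop ≤ (1 : EReal) := by
  have key : ∀ ε : ℝ, 0 < ε → ε ≤ 1/4 →
      Filter.limsup (fun t : ℝ => ((V t : ℝ) : EReal)) atTop ≤ ((1 + 9*ε : ℝ) : EReal) := by
    intro ε hε hε4
    -- Obtain N such that the ratio is at most 1/2 + ε beyond N
    have hb : ∀ j, p (j+1) / p j ≤ 1 := fun j =>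
      div_le_one_of_le₀ (hmono j) (hpos j).le
    have hlt : Filter.limsup (fun j : ℕ => p (j + 1) / p j) atTop < 1/2 + ε :=
      lt_of_le_of_lt hratio (by linarith)
    have hev : ∀ᶠ j in atTop, p (j+1) / p j < 1/2 + ε :=
      eventually_lt_of_limsup_lt hlt (isBoundedUnder_of ⟨1, hb⟩)
    obtain ⟨N, hN⟩ := eventually_atTop.mp hev
    have hNle : ∀ j, N ≤ j → p (j+1) ≤ (1/2 + ε) * p j := by
      intro j hj
      have := hN j hj
      rw [div_lt_iff₀ (hpos j)] at this
      linarith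
    -- the eventual bound on V t
    have hevV : ∀ᶠ t : ℝ in atTop, V t ≤ 1 + 9*ε := by
      -- the head sum tends to 0
      have hhead : Filter.Tendsto (fun t : ℝ => ∑ j ∈ Finset.range N, Real.exp (-(t * p j)))
          atTop (nhds 0) := by
        have : (0 : ℝ) = ∑ j ∈ Finset.range N, (0 : ℝ) := by simp
        rw [this]
        refine tendsto_finset_sum _ fun j _ => ?_
        have h1 : Filter.Tendsto (fun t : ℝ => t * p j) atTop atTop :=
          Filter.tendsto_id.atTop_mul_const (hpos j)
        have h2 : Filter.Tendsto (fun t : ℝ => -(t * p j)) atTop atBot :=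
          Filter.tendsto_neg_atTop_atBot.comp h1
        exact Real.tendsto_exp_atBot.comp h2
      have hsmall : ∀ᶠ t : ℝ in atTop,
          (∑ j ∈ Finset.range N, Real.exp (-(t * p j))) < ε :=
        hhead.eventually_lt_const hε
      filter_upwards [hsmall, eventually_ge_atTop (0 : ℝ)] with t hts ht0
      -- summability
      have hnn : ∀ j : ℕ, 0 ≤ Real.exp (-(t * p j)) - Real.exp (-(2 * t * p j)) := by
        intro j
        have := term_nonneg (t * p j) (mul_nonneg ht0 (hpos j).le)
        rw [show -(2*(t*p j)) = -(2*t*p j) by ring] at this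
        exact this
      have hsummf : Summable (fun j : ℕ => Real.exp (-(t * p j)) - Real.exp (-(2 * t * p j))) := by
        refine Summable.of_nonneg_of_le hnn (fun j => ?_) (hsum.mul_left t)
        have := term_le (t * p j) (mul_nonneg ht0 (hpos j).le)
        rw [show -(2*(t*p j)) = -(2*t*p j) by ring] at this
        exact this
      rw [hV t, ← Summable.sum_add_tsum_nat_add N hsummf]
      -- head bound
      have hheadb : ∑ j ∈ Finset.range N, (Real.exp (-(t * p j)) - Real.exp (-(2 * t * p j)))
          ≤ ∑ j ∈ Finset.range N, Real.exp (-(t * p j)) :=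
        Finset.sum_le_sum fun j _ => sub_le_self _ (Real.exp_pos _).le
      -- tail bound via telescoping
      have htail : (∑' i : ℕ, (Real.exp (-(t * p (i + N))) - Real.exp (-(2 * t * p (i + N)))))
          ≤ 1 + 8*ε := by
        refine Real.tsum_le_of_sum_range_le (fun i => hnn (i + N)) fun M => ?_
        set G : ℕ → ℝ := fun i => Real.exp (-(2 * (t * p (i + N)))) with hG
        set H : ℕ → ℝ := fun i => Real.exp (-(t * p (i + N))) with hH
        have hstep : ∀ i ∈ Finset.range M,
            Real.exp (-(t * p (i + N))) - Real.exp (-(2 * t * p (i + N)))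
            ≤ (G (i+1) - G i) + 8*ε*(H (i+1) - H i) := by
          intro i _
          have hidx : i + 1 + N = (i + N) + 1 := by omega
          have hy : t * p (i + 1 + N) ≤ (1/2 + ε) * (t * p (i + N)) := by
            rw [hidx]
            have := hNle (i + N) (Nat.le_add_left N i)
            calc t * p (i + N + 1) ≤ t * ((1/2 + ε) * p (i + N)) :=
                  mul_le_mul_of_nonneg_left this ht0
              _ = (1/2 + ε) * (t * p (i + N)) := by ring
          have := perterm (t * p (i + N)) (t * p (i + 1 + N)) ε
            (mul_nonneg ht0 (hpos _).le) hε hε4 hy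
          simp only [hG, hH]
          rw [show (2 : ℝ) * t * p (i + N) = 2 * (t * p (i + N)) by ring]
          exact this
        calc ∑ i ∈ Finset.range M,
              (Real.exp (-(t * p (i + N))) - Real.exp (-(2 * t * p (i + N))))
            ≤ ∑ i ∈ Finset.range M, ((G (i+1) - G i) + 8*ε*(H (i+1) - H i)) :=
              Finset.sum_le_sum hstep
          _ = (G M - G 0) + 8*ε*(H M - H 0) := by
              rw [Finset.sum_add_distrib, Finset.sum_range_sub G M, ← Finset.mul_sum,
                Finset.sum_range_sub H M]
          _ ≤ 1 + 8*ε := by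
              have hG1 : G M ≤ 1 := Real.exp_le_one_iff.mpr
                (by nlinarith [mul_nonneg ht0 (hpos (M + N)).le])
              have hG0 : 0 < G 0 := Real.exp_pos _
              have hH1 : H M ≤ 1 := Real.exp_le_one_iff.mpr
                (by nlinarith [mul_nonneg ht0 (hpos (M + N)).le])
              have hH0 : 0 < H 0 := Real.exp_pos _
              nlinarith
      linarith
    -- pass to the limsup
    refine Filter.limsup_le_of_le (by isBoundedDefault) ?_
    filter_upwards [hevV] with t ht
    exact EReal.coe_le_coe_iff.mpr ht
  -- conclude by letting ε → 0
  refine le_of_forall_gt_imp_ge_of_dense fun c hc => ?_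
  obtain ⟨x, hx1, hxc⟩ := EReal.exists_between_coe_real hc
  have hx1' : (1 : ℝ) < x := by exact_mod_cast hx1
  set ε : ℝ := min ((x - 1)/9) (1/4) with hεdef
  have hεpos : 0 < ε := lt_min (by linarith) (by norm_num)
  have hε4 : ε ≤ 1/4 := min_le_right _ _
  have h9 : 1 + 9*ε ≤ x := by
    have : ε ≤ (x - 1)/9 := min_le_left _ _
    linarith
  calc Filter.limsup (fun t : ℝ => ((V t : ℝ) : EReal)) atTop
      ≤ ((1 + 9*ε : ℝ) : EReal) := key ε hεpos hε4
    _ ≤ ((x : ℝ) : EReal) := EReal.coe_le_coe_iff.mpr h9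
    _ ≤ c := hxc.le
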